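/- The operator Y with coefficients A_1(x) = q^{β-x}[x-N]_q[x+1-α]_q[x-α]_q, A_2(x) = q^{-x}[x]_q[x-N-α+β]_q[x-α]_q, A_0(x) = -(A_1(x)+A_2(x)), acting as Y f(x) = A_1(x) f(x+1) + A_0(x) f(x) + A_2(x) f(x-1), satisfies Y φ_n(x;α) = ν_n^{(1)} φ_{n+1}(x;α) + ν_n^{(2)} φ_n(x;α) + ν_n^{(3)} φ_{n-1}(x;α), with ν_n^{(1)} = -[-n]_q[n]_q[n+β-N]_q, ν_n^{(2)} = [-n]_q[n+β-N]_q[n-α]_q + q^{β-α}[n]_q[n-N-1]_q[1-n]_q, ν_n^{(3)} = -q^{β-2α}[n]_q[n-N-1]_q[1+α-n]_q. -/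

import Mathlib

open Finset

noncomputable def qnum (q y : ℝ) : ℝ := (1 - q ^ y) / (1 - q)

noncomputable def qPoch (a q : ℝ) (n : ℕ) : ℝ := ∏ j ∈ Finset.range n, (1 - a * q ^ j)

noncomputable def phi (q α : ℝ) (n : ℕ) (x : ℤ) : ℝ :=
  qPoch (q ^ (-(x : ℝ))) q n / qPoch (q ^ (α - (x : ℝ))) q n

noncomputable def A1 (q α β : ℝ) (N : ℕ) (x : ℤ) : ℝ :=
  q ^ (β - (x : ℝ)) * qnum q ((x : ℝ) - N) * qnum q ((x : ℝ) + 1 - α) * qnum q ((x : ℝ) - α)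

noncomputable def A2 (q α β : ℝ) (N : ℕ) (x : ℤ) : ℝ :=
  q ^ (-(x : ℝ)) * qnum q (x : ℝ) * qnum q ((x : ℝ) - N - α + β) * qnum q ((x : ℝ) - α)

noncomputable def A0 (q α β : ℝ) (N : ℕ) (x : ℤ) : ℝ := -(A1 q α β N x + A2 q α β N x)

lemma qPoch_back (a q : ℝ) (k : ℕ) :
    qPoch a q (k+1) = qPoch a q k * (1 - a * q ^ k) := by
  simp [qPoch, Finset.prod_range_succ]

lemma qPoch_front (a q : ℝ) (k : ℕ) :
    qPoch a q (k+1) = (1 - a) * qPoch (a * q) q k := by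
  rw [qPoch, Finset.prod_range_succ', qPoch, mul_comm]
  congr 1
  · simp
  · exact Finset.prod_congr rfl fun j _ => by rw [pow_succ]; ring

set_option maxHeartbeats 2000000 in
private lemma key (q X A B G M E F : ℝ) (hq0 : q ≠ 0) (h1q : 1 - q ≠ 0)
    (hX : X ≠ 0) (hA : A ≠ 0) (hB : B ≠ 0) (hG : G ≠ 0) (hM : M ≠ 0) (hF : F ≠ 0)
    (w0 : X - A ≠ 0) (wC : X * q - A ≠ 0) (w1 : X - A * q * M ≠ 0)
    (w2 : X - A * q * (M * q) ≠ 0) :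
  B / X * ((1 - X / G) / (1 - q)) * ((1 - X * q / A) / (1 - q)) * ((1 - X / A) / (1 - q)) *
          ((1 - X⁻¹ / q) * ((1 - X⁻¹) * E) / ((1 - A / X / q) * ((1 - A / X) * F))) +
        -(B / X * ((1 - X / G) / (1 - q)) * ((1 - X * q / A) / (1 - q)) * ((1 - X / A) / (1 - q)) +
              X⁻¹ * ((1 - X) / (1 - q)) * ((1 - X / G / A * B) / (1 - q)) * ((1 - X / A) / (1 - q))) *
          ((1 - X⁻¹) * (E * (1 - X⁻¹ * q * M)) / ((1 - A / X) * (F * (1 - A / X * q * M)))) +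
      X⁻¹ * ((1 - X) / (1 - q)) * ((1 - X / G / A * B) / (1 - q)) * ((1 - X / A) / (1 - q)) *
        (E * (1 - X⁻¹ * q * M) * (1 - X⁻¹ * q * (M * q)) / (F * (1 - A / X * q * M) * (1 - A / X * q * (M * q)))) =
    -((1 - (M * q * q)⁻¹) / (1 - q) * ((1 - M * q * q) / (1 - q)) * ((1 - M * q * q * B / G) / (1 - q))) *
          ((1 - X⁻¹) * (E * (1 - X⁻¹ * q * M) * (1 - X⁻¹ * q * (M * q))) /
            ((1 - A / X) * (F * (1 - A / X * q * M) * (1 - A / X * q * (M * q))))) +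
        ((1 - (M * q * q)⁻¹) / (1 - q) * ((1 - M * q * q * B / G) / (1 - q)) * ((1 - M * q * q / A) / (1 - q)) +
            B / A * ((1 - M * q * q) / (1 - q)) * ((1 - M * q * q / G / q) / (1 - q)) *
              ((1 - q / (M * q * q)) / (1 - q))) *
          ((1 - X⁻¹) * (E * (1 - X⁻¹ * q * M)) / ((1 - A / X) * (F * (1 - A / X * q * M)))) +
      -(B / A / A * ((1 - M * q * q) / (1 - q)) * ((1 - M * q * q / G / q) / (1 - q)) *
            ((1 - q * A / (M * q * q)) / (1 - q))) *
        ((1 - X⁻¹) * E / ((1 - A / X) * F)) := by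
  have hXq : X * q ≠ 0 := mul_ne_zero hX hq0
  have hMqq : M * q * q ≠ 0 := mul_ne_zero (mul_ne_zero hM hq0) hq0
  have hGA : G * A ≠ 0 := mul_ne_zero hG hA
  have hGq : G * q ≠ 0 := mul_ne_zero hG hq0
  rw [show 1 - X / G = (G - X) / G from by field_simp,
      show 1 - X * q / A = -((X * q - A) / A) from by field_simp; ring,
      show 1 - X / A = -((X - A) / A) from by field_simp; ring,
      show 1 - X⁻¹ / q = (X * q - 1) / (X * q) from by field_simp,
      show 1 - X⁻¹ = (X - 1) / X from by field_simp,
      show 1 - A / X / q = (X * q - A) / (X * q) from by rw [div_div]; field_simp,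
      show 1 - A / X = (X - A) / X from by field_simp,
      show 1 - X = -(X - 1) from by ring,
      show 1 - X / G / A * B = (G * A - X * B) / (G * A) from by rw [div_div]; field_simp,
      show 1 - X⁻¹ * q * M = (X - q * M) / X from by field_simp,
      show 1 - A / X * q * M = (X - A * q * M) / X from by field_simp,
      show 1 - X⁻¹ * q * (M * q) = (X - q * (M * q)) / X from by field_simp,
      show 1 - A / X * q * (M * q) = (X - A * q * (M * q)) / X from by field_simp,
      show 1 - (M * q * q)⁻¹ = (M * q * q - 1) / (M * q * q) from by field_simp,
      show 1 - M * q * q = -(M * q * q - 1) from by ring,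
      show 1 - M * q * q * B / G = (G - M * q * q * B) / G from by field_simp,
      show 1 - M * q * q / A = (A - M * q * q) / A from by field_simp,
      show 1 - M * q * q / G / q = (G * q - M * q * q) / (G * q) from by rw [div_div]; field_simp,
      show 1 - q / (M * q * q) = (M * q * q - q) / (M * q * q) from by field_simp,
      show 1 - q * A / (M * q * q) = (M * q * q - q * A) / (M * q * q) from by field_simp]
  generalize hP1 : X - 1 = P1
  generalize hP2 : X * q - 1 = P2
  generalize hP3 : G - X = P3
  generalize hPb : G * A - X * B = Pb
  generalize hU1 : X - q * M = U1
  generalize hU2 : X - q * (M * q) = U2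
  generalize hV : M * q * q - 1 = V
  generalize hW1 : G - M * q * q * B = W1
  generalize hW2 : A - M * q * q = W2
  generalize hW3 : G * q - M * q * q = W3
  generalize hW4 : M * q * q - q = W4
  generalize hW5 : M * q * q - q * A = W5
  generalize hS0 : X - A = S0
  generalize hSC : X * q - A = SC
  generalize hS1 : X - A * q * M = S1
  generalize hS2 : X - A * q * (M * q) = S2
  generalize hT : 1 - q = T
  rw [hS0] at w0
  rw [hSC] at wC
  rw [hS1] at w1
  rw [hS2] at w2
  rw [hT] at h1q
  trans (B * P3 * P2 * P1 * E * (M * q * q) * q * S0 * S1 * S2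
      + -((B * P3 * SC + P1 * Pb) * P1 * E * U1 * (M * q * q) * q * S0 * S2)
      + P1 * Pb * S0 * E * U1 * U2 * (M * q * q) * q * S0)
      / (X * A * A * G * (T * T * T) * (M * q * q) * q * S0 * S1 * S2 * F)
  · field_simp
  trans (V * V * W1 * P1 * E * U1 * U2 * X * A * A * q
      + (V * W1 * W2 * q - B * V * W3 * W4) * P1 * E * U1 * X * A * S2
      + B * V * W3 * W5 * P1 * E * X * S1 * S2)
      / (X * A * A * G * (T * T * T) * (M * q * q) * q * S0 * S1 * S2 * F)
  · rw [show B * P3 * P2 * P1 * E * (M * q * q) * q * S0 * S1 * S2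
      + -((B * P3 * SC + P1 * Pb) * P1 * E * U1 * (M * q * q) * q * S0 * S2)
      + P1 * Pb * S0 * E * U1 * U2 * (M * q * q) * q * S0
      = V * V * W1 * P1 * E * U1 * U2 * X * A * A * q
      + (V * W1 * W2 * q - B * V * W3 * W4) * P1 * E * U1 * X * A * S2
      + B * V * W3 * W5 * P1 * E * X * S1 * S2 from by
      rw [← hP1, ← hP2, ← hP3, ← hPb, ← hU1, ← hU2, ← hV, ← hW1, ← hW2, ← hW3,
        ← hW4, ← hW5, ← hS0, ← hSC, ← hS1, ← hS2]
      ring]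
  · field_simp
    ring

set_option maxHeartbeats 2000000 in
private lemma key1 (q : ℝ) (hq0 : q ≠ 0) (h1q : 1 - q ≠ 0) (G : ℝ) (hNne : G ≠ 0) (B A : ℝ) (hane : A ≠ 0) (X : ℝ)
  (hxne : X ≠ 0) (w0 : X - A ≠ 0) (wC : X * q - A ≠ 0) (w1 : X - A * q ≠ 0) :
  B / X * ((1 - X / G) / (1 - q)) * ((1 - X * q / A) / (1 - q)) *
            ((1 - X / A) / (1 - q)) *
          ((1 - X⁻¹ / q) / (1 - A / X / q)) +
        -(B / X * ((1 - X / G) / (1 - q)) * ((1 - X * q / A) / (1 - q)) *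
                ((1 - X / A) / (1 - q)) +
              X⁻¹ * ((1 - X) / (1 - q)) * ((1 - X / G / A * B) / (1 - q)) *
                ((1 - X / A) / (1 - q))) *
          ((1 - X⁻¹) / (1 - A / X)) +
      X⁻¹ * ((1 - X) / (1 - q)) * ((1 - X / G / A * B) / (1 - q)) *
          ((1 - X / A) / (1 - q)) *
        ((1 - X⁻¹ * q) / (1 - A / X * q)) =
    -((1 - q⁻¹) / (1 - q) * ((1 - q) / (1 - q)) * ((1 - q * B / G) / (1 - q))) *
          ((1 - X⁻¹) * (1 - X⁻¹ * q) / ((1 - A / X) * (1 - A / X * q))) +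
        ((1 - q⁻¹) / (1 - q) * ((1 - q * B / G) / (1 - q)) * ((1 - q / A) / (1 - q)) +
            B / A * ((1 - q) / (1 - q)) * ((1 - q / G / q) / (1 - q)) * ((1 - q / q) / (1 - q))) *
          ((1 - X⁻¹) / (1 - A / X)) +
      -(B / A / A * ((1 - q) / (1 - q)) * ((1 - q / G / q) / (1 - q)) *
            ((1 - q * A / q) / (1 - q))) *
        (1 / 1) := by
  have w1' : X - q * A ≠ 0 := by intro h; apply w1; linear_combination h
  have w0' : A - X ≠ 0 := by intro h; apply w0; linear_combination -h
  have wC' : A - X * q ≠ 0 := by intro h; apply wC; linear_combination -h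
  field_simp
  ring

set_option maxHeartbeats 2000000 in
/-- the tridiagonal action of `Y` on the basis `φ_n(x;α)`:
`Y φ_n = ν_n^{(1)} φ_{n+1} + ν_n^{(2)} φ_n + ν_n^{(3)} φ_{n-1}` (for `n ≥ 1`). -/
theorem Y_on_phi (q α β : ℝ) (N : ℕ) (hq : 0 < q) (hq1 : q ≠ 1) (hN : 0 < N)
    (hgen : ∀ (x : ℤ) (k : ℕ), qPoch (q ^ (α - (x : ℝ))) q k ≠ 0)
    (n : ℕ) (hn : 1 ≤ n) (x : ℤ) :
    A1 q α β N x * phi q α n (x + 1) + A0 q α β N x * phi q α n x +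
        A2 q α β N x * phi q α n (x - 1) =
      (-(qnum q (-(n : ℝ)) * qnum q (n : ℝ) * qnum q ((n : ℝ) + β - N))) * phi q α (n + 1) x +
      (qnum q (-(n : ℝ)) * qnum q ((n : ℝ) + β - N) * qnum q ((n : ℝ) - α) +
        q ^ (β - α) * qnum q (n : ℝ) * qnum q ((n : ℝ) - N - 1) * qnum q (1 - (n : ℝ))) *
          phi q α n x +
      (-(q ^ (β - 2 * α) * qnum q (n : ℝ) * qnum q ((n : ℝ) - N - 1) *
          qnum q (1 + α - (n : ℝ)))) * phi q α (n - 1) x := by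
  rcases Nat.lt_or_ge n 2 with hsmall | hbig
  · -- n = 1
    have hone : n = 1 := by omega
    subst hone
    have hq0 : q ≠ 0 := ne_of_gt hq
    have h1q : (1:ℝ) - q ≠ 0 := sub_ne_zero.mpr (Ne.symm hq1)
    have hz : ∀ y : ℝ, qPoch (q ^ y) q 0 = 1 := by intro y; simp [qPoch]
    have hone' : ∀ y : ℝ, qPoch (q ^ y) q 1 = 1 - q ^ y := by intro y; simp [qPoch]
    have htwo : ∀ y : ℝ, qPoch (q ^ y) q 2 = (1 - q ^ y) * (1 - q ^ y * q) := by
      intro y; simp [qPoch, Finset.prod_range_succ]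
    have hA := hgen x 1
    rw [hone'] at hA
    have hB := hgen x 2
    rw [htwo] at hB
    obtain ⟨hd0, hd1⟩ := mul_ne_zero_iff.mp hB
    have hC := hgen (x+1) 1
    rw [show ((((x+1:ℤ)):ℝ)) = (x:ℝ)+1 by push_cast; ring, hone',
      show α - ((x:ℝ)+1) = α - (x:ℝ) - 1 by ring] at hC
    simp only [phi, A0, A1, A2, qnum, Int.cast_add, Int.cast_sub, Int.cast_one]
    rw [show -((x:ℝ)+1) = -(x:ℝ)-1 by ring, show -((x:ℝ)-1) = -(x:ℝ)+1 by ring,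
       show α-((x:ℝ)+1) = α-(x:ℝ)-1 by ring, show α-((x:ℝ)-1) = α-(x:ℝ)+1 by ring,
       show β - 2*α = β - α - α by ring,
       show (1:ℕ)+1 = 2 from rfl, show (1:ℕ)-1 = 0 from rfl]
    simp only [hz, hone', htwo]
    have hxne : (q:ℝ) ^ (x:ℤ) ≠ 0 := zpow_ne_zero _ hq0
    have hane : q ^ α ≠ 0 := (Real.rpow_pos_of_pos hq α).ne'
    have hNne : (q:ℝ) ^ (N:ℕ) ≠ 0 := pow_ne_zero _ hq0
    simp only [Real.rpow_add hq, Real.rpow_sub hq, Real.rpow_neg hq.le, Real.rpow_one,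
      Real.rpow_natCast, Real.rpow_intCast, Nat.cast_one, pow_one] at hd0 hd1 hC ⊢
    have w0 : (q:ℝ) ^ (x:ℤ) - q ^ α ≠ 0 := by
      intro h; apply hd0; rw [sub_eq_zero] at h; rw [h, div_self hane, sub_self]
    have wC : (q:ℝ) ^ (x:ℤ) * q - q ^ α ≠ 0 := by
      intro h; apply hC; rw [sub_eq_zero] at h; rw [← h, div_div, div_self (mul_ne_zero hxne hq0), sub_self]
    have w1 : (q:ℝ) ^ (x:ℤ) - q ^ α * q ≠ 0 := by
      intro h; apply hd1; rw [sub_eq_zero] at h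
      rw [div_mul_eq_mul_div, ← h]; field_simp; norm_num
    exact key1 q hq0 h1q _ hNne _ _ hane _ hxne w0 wC w1
  · -- n = m + 2
    obtain ⟨m, rfl⟩ : ∃ m, n = m + 2 := ⟨n - 2, by omega⟩
    have hq0 : q ≠ 0 := ne_of_gt hq
    have h1q : (1:ℝ) - q ≠ 0 := sub_ne_zero.mpr (Ne.symm hq1)
    have hmulq : ∀ c : ℝ, q ^ c * q = q ^ (c + 1) := fun c => by
      rw [Real.rpow_add hq, Real.rpow_one]
    have hf : ∀ (c : ℝ) (k : ℕ), qPoch (q ^ c) q (k+1) = (1 - q ^ c) * qPoch (q ^ (c+1)) q k :=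
      fun c k => by rw [qPoch_front, hmulq]
    -- splits for the numerators (base -x) and denominators (base α-x)
    have e1 : qPoch (q ^ (-(x:ℝ))) q (m+2)
        = (1 - q ^ (-(x:ℝ))) * (qPoch (q ^ (-(x:ℝ)+1)) q m * (1 - q ^ (-(x:ℝ)+1) * q ^ m)) := by
      rw [show m+2 = (m+1)+1 from rfl, hf, qPoch_back]
    have e2 : qPoch (q ^ (-(x:ℝ)-1)) q (m+2)
        = (1 - q ^ (-(x:ℝ)-1)) * ((1 - q ^ (-(x:ℝ))) * qPoch (q ^ (-(x:ℝ)+1)) q m) := by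
      rw [show m+2 = (m+1)+1 from rfl, hf, hf, show -(x:ℝ)-1+1 = -(x:ℝ) by ring]
    have e3 : qPoch (q ^ (-(x:ℝ)+1)) q (m+2)
        = qPoch (q ^ (-(x:ℝ)+1)) q m * (1 - q ^ (-(x:ℝ)+1) * q ^ m) * (1 - q ^ (-(x:ℝ)+1) * q ^ (m+1)) := by
      rw [show m+2 = (m+1)+1 from rfl, qPoch_back, qPoch_back]
    have e4 : qPoch (q ^ (-(x:ℝ))) q (m+3)
        = (1 - q ^ (-(x:ℝ))) * (qPoch (q ^ (-(x:ℝ)+1)) q m * (1 - q ^ (-(x:ℝ)+1) * q ^ m) * (1 - q ^ (-(x:ℝ)+1) * q ^ (m+1))) := by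
      rw [show m+3 = (m+2)+1 from rfl, hf, show m+2 = (m+1)+1 from rfl, qPoch_back, qPoch_back]
    have e5 : qPoch (q ^ (-(x:ℝ))) q (m+1)
        = (1 - q ^ (-(x:ℝ))) * qPoch (q ^ (-(x:ℝ)+1)) q m := hf _ _
    have f1 : qPoch (q ^ (α-(x:ℝ))) q (m+2)
        = (1 - q ^ (α-(x:ℝ))) * (qPoch (q ^ (α-(x:ℝ)+1)) q m * (1 - q ^ (α-(x:ℝ)+1) * q ^ m)) := by
      rw [show m+2 = (m+1)+1 from rfl, hf, qPoch_back]
    have f2 : qPoch (q ^ (α-(x:ℝ)-1)) q (m+2)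
        = (1 - q ^ (α-(x:ℝ)-1)) * ((1 - q ^ (α-(x:ℝ))) * qPoch (q ^ (α-(x:ℝ)+1)) q m) := by
      rw [show m+2 = (m+1)+1 from rfl, hf, hf, show α-(x:ℝ)-1+1 = α-(x:ℝ) by ring]
    have f3 : qPoch (q ^ (α-(x:ℝ)+1)) q (m+2)
        = qPoch (q ^ (α-(x:ℝ)+1)) q m * (1 - q ^ (α-(x:ℝ)+1) * q ^ m) * (1 - q ^ (α-(x:ℝ)+1) * q ^ (m+1)) := by
      rw [show m+2 = (m+1)+1 from rfl, qPoch_back, qPoch_back]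
    have f4 : qPoch (q ^ (α-(x:ℝ))) q (m+3)
        = (1 - q ^ (α-(x:ℝ))) * (qPoch (q ^ (α-(x:ℝ)+1)) q m * (1 - q ^ (α-(x:ℝ)+1) * q ^ m) * (1 - q ^ (α-(x:ℝ)+1) * q ^ (m+1))) := by
      rw [show m+3 = (m+2)+1 from rfl, hf, show m+2 = (m+1)+1 from rfl, qPoch_back, qPoch_back]
    have f5 : qPoch (q ^ (α-(x:ℝ))) q (m+1)
        = (1 - q ^ (α-(x:ℝ))) * qPoch (q ^ (α-(x:ℝ)+1)) q m := hf _ _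
    -- nonvanishing facts
    have hA := hgen x (m+1)
    rw [f5] at hA
    obtain ⟨hd0, hF⟩ := mul_ne_zero_iff.mp hA
    have hB := hgen x (m+3)
    rw [f4] at hB
    obtain ⟨-, hB⟩ := mul_ne_zero_iff.mp hB
    obtain ⟨hB, hd2⟩ := mul_ne_zero_iff.mp hB
    obtain ⟨-, hd1⟩ := mul_ne_zero_iff.mp hB
    have hC := hgen (x+1) 1
    have hq1' : qPoch (q ^ (α - ((x:ℝ)+1))) q 1 = 1 - q ^ (α - (x:ℝ) - 1) := by
      simp [qPoch]
      rw [show α - ((x:ℝ)+1) = α - (x:ℝ) - 1 by ring]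
    rw [show ((((x+1:ℤ)):ℝ)) = (x:ℝ)+1 by push_cast; ring] at hC
    rw [hq1'] at hC
    -- unfold and rewrite
    simp only [phi, A0, A1, A2, qnum, Nat.add_sub_cancel, Int.cast_add, Int.cast_sub, Int.cast_one]
    rw [show -((x:ℝ)+1) = -(x:ℝ)-1 by ring, show -((x:ℝ)-1) = -(x:ℝ)+1 by ring,
       show α-((x:ℝ)+1) = α-(x:ℝ)-1 by ring, show α-((x:ℝ)-1) = α-(x:ℝ)+1 by ring,
       show β - 2*α = β - α - α by ring]
    rw [show m+2+1 = m+3 from rfl, show m+2-1 = m+1 from rfl]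
    rw [e1, e2, e3, e4, e5, f1, f2, f3, f4, f5]
    -- decompose all rpow into atoms
    have hxne : (q:ℝ) ^ (x:ℤ) ≠ 0 := zpow_ne_zero _ hq0
    have hane : q ^ α ≠ 0 := (Real.rpow_pos_of_pos hq α).ne'
    have hbne : q ^ β ≠ 0 := (Real.rpow_pos_of_pos hq β).ne'
    have hNne : (q:ℝ) ^ (N:ℕ) ≠ 0 := pow_ne_zero _ hq0
    have hmne : (q:ℝ) ^ (m:ℕ) ≠ 0 := pow_ne_zero _ hq0
    simp only [Real.rpow_add hq, Real.rpow_sub hq, Real.rpow_neg hq.le, Real.rpow_one,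
      Real.rpow_natCast, Real.rpow_intCast] at hd0 hd1 hd2 hC hF ⊢
    have hp2 : ((q:ℝ) ^ (m+2)) = q^m*q*q := by ring
    have hp1 : ((q:ℝ) ^ (m+1)) = q^m*q := by ring
    simp only [hp1, hp2] at hd1 hd2 ⊢
    set E := qPoch ((q ^ x)⁻¹ * q) q m with hEdef
    set F := qPoch (q ^ α / q ^ x * q) q m with hFdef
    set X := (q:ℝ) ^ x with hXdef
    set A := q ^ α with hAdef
    set B := q ^ β with hBdef
    set G := (q:ℝ) ^ N with hGdef
    set M := (q:ℝ) ^ m with hMdef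
    have w0 : X - A ≠ 0 := by
      intro h; apply hd0; rw [sub_eq_zero] at h; rw [h, div_self hane, sub_self]
    have wC : X * q - A ≠ 0 := by
      intro h; apply hC; rw [sub_eq_zero] at h; rw [← h, div_div, div_self (mul_ne_zero hxne hq0), sub_self]
    have w1 : X - A * q * M ≠ 0 := by
      intro h; apply hd1; rw [sub_eq_zero] at h
      rw [div_mul_eq_mul_div, div_mul_eq_mul_div, ← h]; field_simp; norm_num
    have w2 : X - A * q * (M * q) ≠ 0 := by
      intro h; apply hd2; rw [sub_eq_zero] at h
      rw [div_mul_eq_mul_div, div_mul_eq_mul_div, ← h]; field_simp; norm_num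
    exact key q X A B G M E F hq0 h1q hxne hane hbne hNne hmne hF w0 wC w1 w2
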